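/- Fix an integer N > 1. Let S₁ and S₂ be KdV subsets such that S₁ + 1 ⊆ S₂, and let A be the leading term of S₁. Then S₂ is a mutation of S₁: there exists a ∈ A such that S₂ = S₁[a] = {a+1−N} ∪ (S₁+1). -/

import Mathlib

/-- A subset `S ⊆ ℤ` is of virtual cardinal zero if both `S \ ℤ≥0` and `ℤ≥0 \ S`
are finite and have the same cardinality. -/
def VirtualCardZero (S : Set ℤ) : Prop :=
  (S \ {n : ℤ | 0 ≤ n}).Finite ∧ ({n : ℤ | 0 ≤ n} \ S).Finite ∧
    (S \ {n : ℤ | 0 ≤ n}).ncard = ({n : ℤ | 0 ≤ n} \ S).ncard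

/-- The shift `S + k = {s + k : s ∈ S}` of a set of integers. -/
def shiftSet (S : Set ℤ) (k : ℤ) : Set ℤ := (fun s => s + k) '' S

/-- A KdV subset (for a fixed `N`): a subset `S ⊆ ℤ` of virtual cardinal zero
such that `S + N ⊆ S`. -/
def IsKdV (N : ℕ) (S : Set ℤ) : Prop :=
  VirtualCardZero S ∧ shiftSet S N ⊆ S

/-- `A` is the leading term of the KdV subset `S`: `A` is an `N`-element set with
`S = A ∪ (S+N)` and `A ∩ (S+N) = ∅`. -/
def IsLeadingTerm (N : ℕ) (S : Set ℤ) (A : Finset ℤ) : Prop :=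
  A.card = N ∧ (↑A : Set ℤ) ∪ shiftSet S N = S ∧ (↑A : Set ℤ) ∩ shiftSet S N = ∅

/-- The mutation `S[a] = {a+1−N} ∪ (S+1)` of a KdV subset `S` at an element `a`
of its leading term. -/
def mutate (N : ℕ) (S : Set ℤ) (a : ℤ) : Set ℤ :=
  {a + 1 - (N : ℤ)} ∪ shiftSet S 1

namespace KdVaux

noncomputable def d (S : Set ℤ) : ℤ :=
  ((S \ {n : ℤ | 0 ≤ n}).ncard : ℤ) - (({n : ℤ | 0 ≤ n} \ S).ncard : ℤ)

lemma diff_finite {S T : Set ℤ} (hTS : T ⊆ S)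
    (h1 : (S \ {n : ℤ | 0 ≤ n}).Finite) (h2 : ({n : ℤ | 0 ≤ n} \ T).Finite) :
    (S \ T).Finite := by
  apply Set.Finite.subset (h1.union h2)
  intro x hx
  by_cases h : (0:ℤ) ≤ x
  · exact Or.inr ⟨h, hx.2⟩
  · exact Or.inl ⟨hx.1, h⟩

lemma diff_ncard {S T : Set ℤ} (hTS : T ⊆ S)
    (hS1 : (S \ {n : ℤ | 0 ≤ n}).Finite) (hS2 : ({n : ℤ | 0 ≤ n} \ S).Finite)
    (hT1 : (T \ {n : ℤ | 0 ≤ n}).Finite) (hT2 : ({n : ℤ | 0 ≤ n} \ T).Finite) :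
    ((S \ T).ncard : ℤ) = d S - d T := by
  set P : Set ℤ := {n : ℤ | 0 ≤ n} with hP
  have hST : (S \ T).Finite := diff_finite hTS hS1 hT2
  have eq1 : S \ P = ((S \ T) \ P) ∪ (T \ P) := by
    ext x
    simp only [Set.mem_diff, Set.mem_union]
    constructor
    · rintro ⟨hS, hPx⟩
      by_cases hT : x ∈ T
      · exact Or.inr ⟨hT, hPx⟩
      · exact Or.inl ⟨⟨hS, hT⟩, hPx⟩
    · rintro (⟨⟨hS, _⟩, hPx⟩ | ⟨hT, hPx⟩)
      · exact ⟨hS, hPx⟩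
      · exact ⟨hTS hT, hPx⟩
  have eq2 : P \ T = (P \ S) ∪ ((S \ T) ∩ P) := by
    ext x
    simp only [Set.mem_diff, Set.mem_union, Set.mem_inter_iff]
    constructor
    · rintro ⟨hPx, hT⟩
      by_cases hS : x ∈ S
      · exact Or.inr ⟨⟨hS, hT⟩, hPx⟩
      · exact Or.inl ⟨hPx, hS⟩
    · rintro (⟨hPx, hS⟩ | ⟨⟨_, hT⟩, hPx⟩)
      · exact ⟨hPx, fun h => hS (hTS h)⟩
      · exact ⟨hPx, hT⟩
  have eq3 : S \ T = ((S \ T) \ P) ∪ ((S \ T) ∩ P) := by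
    ext x
    simp only [Set.mem_diff, Set.mem_union, Set.mem_inter_iff]
    tauto
  have c1 : (S \ P).ncard = ((S \ T) \ P).ncard + (T \ P).ncard := by
    rw [eq1]
    apply Set.ncard_union_eq
    · rw [Set.disjoint_left]
      rintro x ⟨⟨_, hT⟩, _⟩ ⟨hT', _⟩
      exact hT hT'
    · exact hST.diff
    · exact hT1
  have c2 : (P \ T).ncard = (P \ S).ncard + ((S \ T) ∩ P).ncard := by
    rw [eq2]
    apply Set.ncard_union_eq
    · rw [Set.disjoint_left]
      rintro x ⟨_, hS⟩ ⟨⟨hS', _⟩, _⟩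
      exact hS hS'
    · exact hS2
    · exact hST.inter_of_left _
  have c3 : (S \ T).ncard = ((S \ T) \ P).ncard + ((S \ T) ∩ P).ncard := by
    conv_lhs => rw [eq3]
    apply Set.ncard_union_eq
    · rw [Set.disjoint_left]
      rintro x ⟨_, hPx⟩ ⟨_, hPx'⟩
      exact hPx hPx'
    · exact hST.diff
    · exact hST.inter_of_left _
  unfold d
  rw [← hP]
  omega

lemma shift_diff1 (S : Set ℤ) :
    shiftSet S 1 \ {n : ℤ | 0 ≤ n} =
      (fun s => s + 1) '' ((S \ {n : ℤ | 0 ≤ n}) \ {-1}) := by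
  ext x
  simp only [shiftSet, Set.mem_diff, Set.mem_image, Set.mem_setOf_eq,
    Set.mem_singleton_iff]
  constructor
  · rintro ⟨⟨s, hs, rfl⟩, hx⟩
    exact ⟨s, ⟨⟨hs, by omega⟩, by omega⟩, rfl⟩
  · rintro ⟨s, ⟨⟨hs, h1⟩, h2⟩, rfl⟩
    exact ⟨⟨s, hs, rfl⟩, by omega⟩

lemma shift_diff2 (S : Set ℤ) :
    {n : ℤ | 0 ≤ n} \ shiftSet S 1 =
      (fun s => s + 1) '' (({n : ℤ | 0 ≤ n} \ S) ∪ ({-1} \ S)) := by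
  ext x
  simp only [shiftSet, Set.mem_diff, Set.mem_image, Set.mem_setOf_eq,
    Set.mem_union, Set.mem_singleton_iff]
  constructor
  · rintro ⟨hx, hnx⟩
    have hxS : x - 1 ∉ S := fun h => hnx ⟨x - 1, h, by ring⟩
    refine ⟨x - 1, ?_, by ring⟩
    by_cases h : 0 ≤ x - 1
    · exact Or.inl ⟨h, hxS⟩
    · exact Or.inr ⟨by omega, hxS⟩
  · rintro ⟨s, (⟨hs, hns⟩ | ⟨hs, hns⟩), rfl⟩
    · refine ⟨by omega, ?_⟩
      rintro ⟨t, ht, h⟩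
      have : t = s := by omega
      exact hns (this ▸ ht)
    · refine ⟨by omega, ?_⟩
      rintro ⟨t, ht, h⟩
      have : t = s := by omega
      exact hns (this ▸ ht)

lemma shift_fin1 {S : Set ℤ} (h1 : (S \ {n : ℤ | 0 ≤ n}).Finite) :
    (shiftSet S 1 \ {n : ℤ | 0 ≤ n}).Finite := by
  rw [shift_diff1]
  exact ((h1.diff).image _)

lemma shift_fin2 {S : Set ℤ} (h2 : ({n : ℤ | 0 ≤ n} \ S).Finite) :
    ({n : ℤ | 0 ≤ n} \ shiftSet S 1).Finite := by
  rw [shift_diff2]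
  exact ((h2.union ((Set.finite_singleton _).diff)).image _)

lemma d_shift {S : Set ℤ} (h1 : (S \ {n : ℤ | 0 ≤ n}).Finite)
    (h2 : ({n : ℤ | 0 ≤ n} \ S).Finite) :
    d (shiftSet S 1) = d S - 1 := by
  have inj : Function.Injective (fun s : ℤ => s + 1) := fun a b h => by
    simpa using h
  unfold d
  rw [shift_diff1, shift_diff2, Set.ncard_image_of_injective _ inj,
    Set.ncard_image_of_injective _ inj]
  by_cases h : (-1 : ℤ) ∈ S
  · have hm : (-1 : ℤ) ∈ S \ {n : ℤ | 0 ≤ n} := ⟨h, by norm_num⟩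
    have e1 : ((S \ {n : ℤ | 0 ≤ n}) \ {-1}).ncard
        = (S \ {n : ℤ | 0 ≤ n}).ncard - 1 :=
      Set.ncard_diff_singleton_of_mem hm
    have e2 : ({-1} \ S : Set ℤ) = ∅ := by
      ext x
      simp only [Set.mem_diff, Set.mem_singleton_iff, Set.mem_empty_iff_false,
        iff_false, not_and]
      rintro rfl hx; exact hx h
    have hpos : 0 < (S \ {n : ℤ | 0 ≤ n}).ncard :=
      (Set.ncard_pos h1).mpr ⟨-1, hm⟩
    rw [e1, e2, Set.union_empty]
    omega
  · have e1 : (S \ {n : ℤ | 0 ≤ n}) \ {-1} = S \ {n : ℤ | 0 ≤ n} := by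
      apply Set.diff_singleton_eq_self
      rintro ⟨hx, _⟩; exact h hx
    have e2 : ({-1} \ S : Set ℤ) = {-1} := by
      ext x
      simp only [Set.mem_diff, Set.mem_singleton_iff]
      constructor
      · rintro ⟨hx, _⟩; exact hx
      · rintro rfl; exact ⟨rfl, h⟩
    have e3 : ({n : ℤ | 0 ≤ n} \ S) ∪ {-1} = insert (-1) ({n : ℤ | 0 ≤ n} \ S) := by
      rw [Set.union_singleton]
    have e4 : (insert (-1) ({n : ℤ | 0 ≤ n} \ S)).ncard
        = ({n : ℤ | 0 ≤ n} \ S).ncard + 1 := by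
      apply Set.ncard_insert_of_notMem _ h2
      rintro ⟨hx, _⟩
      norm_num at hx
    rw [e1, e2, e3, e4]
    omega

end KdVaux


/-- Fix `N > 1`.  Let `S₁, S₂` be KdV subsets with `S₁ + 1 ⊆ S₂`,
and let `A` be the leading term of `S₁`.  Then `S₂` is a mutation of `S₁`: there is
`a ∈ A` with `S₂ = S₁[a] = {a+1−N} ∪ (S₁+1)`. -/
theorem kdv_step_is_mutation (N : ℕ) (hN : 1 < N) (S₁ S₂ : Set ℤ)
    (hS₁ : IsKdV N S₁) (hS₂ : IsKdV N S₂) (hsub : shiftSet S₁ 1 ⊆ S₂)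
    (A : Finset ℤ) (hA : IsLeadingTerm N S₁ A) :
    ∃ a ∈ A, S₂ = mutate N S₁ a := by
  obtain ⟨⟨f1, f2, hc1⟩, hsh1⟩ := hS₁
  obtain ⟨⟨g1, g2, hc2⟩, hsh2⟩ := hS₂
  set T := shiftSet S₁ 1 with hT
  have fT1 : (T \ {n : ℤ | 0 ≤ n}).Finite := KdVaux.shift_fin1 f1
  have fT2 : ({n : ℤ | 0 ≤ n} \ T).Finite := KdVaux.shift_fin2 f2
  have hd : ((S₂ \ T).ncard : ℤ) = KdVaux.d S₂ - KdVaux.d T :=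
    KdVaux.diff_ncard hsub g1 g2 fT1 fT2
  have hdT : KdVaux.d T = KdVaux.d S₁ - 1 := KdVaux.d_shift f1 f2
  have hd1 : KdVaux.d S₁ = 0 := by unfold KdVaux.d; omega
  have hd2 : KdVaux.d S₂ = 0 := by unfold KdVaux.d; omega
  have hone : (S₂ \ T).ncard = 1 := by omega
  obtain ⟨b, hb⟩ := Set.ncard_eq_one.mp hone
  have hbS : b ∈ S₂ ∧ b ∉ T := by
    have : b ∈ S₂ \ T := hb ▸ rfl
    exact ⟨this.1, this.2⟩
  have hbN : b + N ∈ T := by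
    have h1 : b + N ∈ S₂ := hsh2 ⟨b, hbS.1, rfl⟩
    by_contra hc
    have : b + N ∈ S₂ \ T := ⟨h1, hc⟩
    rw [hb] at this
    simp only [Set.mem_singleton_iff] at this
    omega
  obtain ⟨s, hsS, hseq⟩ := hbN
  have hseq' : s + 1 = b + (N : ℤ) := hseq
  have hs : s = b + N - 1 := by omega
  refine ⟨b + N - 1, ?_, ?_⟩
  · have hmem : (b + N - 1 : ℤ) ∈ (↑A : Set ℤ) ∪ shiftSet S₁ N := by
      rw [hA.2.1]
      exact hs ▸ hsS
    rcases hmem with h | h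
    · exact Finset.mem_coe.mp h
    · exfalso
      obtain ⟨t, htS, hteq⟩ := h
      have hteq' : t + (N : ℤ) = b + N - 1 := hteq
      exact hbS.2 ⟨t, htS, show t + 1 = b by omega⟩
  · rw [mutate]
    have hbeq : (b + ↑N - 1 : ℤ) + 1 - ↑N = b := by ring
    rw [hbeq]
    ext x
    simp only [Set.mem_union, Set.mem_singleton_iff]
    constructor
    · intro hx
      by_cases h : x ∈ T
      · exact Or.inr h
      · left
        have : x ∈ S₂ \ T := ⟨hx, h⟩
        rw [hb] at this
        simpa using this
    · rintro (rfl | h)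
      · exact hbS.1
      · exact hsub h
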